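/- Let a, b, c, d be real numbers with a ≥ 1, b ≥ 1, a·b - 1 ≥ c², and a·b - 1 ≥ d². For θ ∈ ℝ let Γ_θ be the 4×4 real matrix with rows (a, 0, c·cos θ, d·sin θ), (0, a, -c·sin θ, d·cos θ), (c·cos θ, -c·sin θ, b, 0), (d·sin θ, d·cos θ, 0, b), and Γ₀ = Γ_θ at θ = 0. Then the set { 1 - √(det Γ₀ · det Γ_θ) / det((Γ₀ + Γ_θ)/2) : θ ∈ [0, π/2] } has greatest element 1 - (a·b - c²)·(a·b - d²) / ((a·b - c²/2)·(a·b - d²/2)). -/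

import Mathlib

open Real Set Matrix

set_option maxHeartbeats 1000000 in
theorem stmt_4 (a b c d : ℝ) (ha : 1 ≤ a) (hb : 1 ≤ b)
    (hc : a * b - 1 ≥ c ^ 2) (hd : a * b - 1 ≥ d ^ 2)
    (Γ : ℝ → Matrix (Fin 4) (Fin 4) ℝ)
    (hΓ : ∀ θ : ℝ, Γ θ =
      !![a, 0, c * Real.cos θ, d * Real.sin θ;
         0, a, -c * Real.sin θ, d * Real.cos θ;
         c * Real.cos θ, -c * Real.sin θ, b, 0;
         d * Real.sin θ, d * Real.cos θ, 0, b]) :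
    IsGreatest
      {x : ℝ | ∃ θ ∈ Set.Icc (0 : ℝ) (π / 2),
        x = 1 - Real.sqrt ((Γ 0).det * (Γ θ).det) / ((1 / 2 : ℝ) • (Γ 0 + Γ θ)).det}
      (1 - (a * b - c ^ 2) * (a * b - d ^ 2) /
        ((a * b - c ^ 2 / 2) * (a * b - d ^ 2 / 2))) := by
  have hc2 : (0:ℝ) ≤ c ^ 2 := sq_nonneg c
  have hd2 : (0:ℝ) ≤ d ^ 2 := sq_nonneg d
  have h1 : (1:ℝ) ≤ a * b - c ^ 2 := by linarith
  have h2 : (1:ℝ) ≤ a * b - d ^ 2 := by linarith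
  have hdet : ∀ θ : ℝ, (Γ θ).det = (a * b - c ^ 2) * (a * b - d ^ 2) := by
    intro θ
    have hsc := Real.sin_sq_add_cos_sq θ
    rw [hΓ]
    simp [Matrix.det_succ_row_zero, Fin.sum_univ_succ, Fin.succAbove,
      Fin.castSucc, Fin.castAdd, Fin.castLE]
    linear_combination (c^2*d^2*(1 + Real.cos θ^2 + Real.sin θ^2)
      - a*b*d^2 - a*b*c^2) * hsc
  have havg : ∀ θ : ℝ, ((1 / 2 : ℝ) • (Γ 0 + Γ θ)).det =
      (a * b - c ^ 2 * (1 + Real.cos θ) / 2) * (a * b - d ^ 2 * (1 + Real.cos θ) / 2) := by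
    intro θ
    have hsc := Real.sin_sq_add_cos_sq θ
    rw [hΓ 0, hΓ θ]
    simp [Matrix.det_succ_row_zero, Fin.sum_univ_succ, Fin.succAbove,
      Fin.castSucc, Fin.castAdd, Fin.castLE, Matrix.smul_apply, Matrix.add_apply]
    linear_combination (c^2*d^2*(3/16 + Real.cos θ/4 + Real.cos θ^2/16 + Real.sin θ^2/16)
      - a*b*(c^2 + d^2)/4) * hsc
  have hsqrt : ∀ θ : ℝ, Real.sqrt ((Γ 0).det * (Γ θ).det)
      = (a * b - c ^ 2) * (a * b - d ^ 2) := by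
    intro θ
    rw [hdet 0, hdet θ]
    exact Real.sqrt_mul_self (by nlinarith)
  constructor
  · refine ⟨π / 2, ⟨by positivity, le_refl _⟩, ?_⟩
    rw [hsqrt, havg, Real.cos_pi_div_two]
    ring_nf
  · rintro x ⟨θ, ⟨h0θ, hθ⟩, rfl⟩
    rw [hsqrt, havg]
    have hcos0 : 0 ≤ Real.cos θ := Real.cos_nonneg_of_mem_Icc ⟨by linarith, hθ⟩
    have hcos1 : Real.cos θ ≤ 1 := Real.cos_le_one θ
    have hM1 : (1:ℝ) ≤ a * b - c ^ 2 * (1 + Real.cos θ) / 2 := by nlinarith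
    have hM2 : (1:ℝ) ≤ a * b - d ^ 2 * (1 + Real.cos θ) / 2 := by nlinarith
    have hMs1 : (1:ℝ) ≤ a * b - c ^ 2 / 2 := by nlinarith
    have hMs2 : (1:ℝ) ≤ a * b - d ^ 2 / 2 := by nlinarith
    have hMle : (a * b - c ^ 2 * (1 + Real.cos θ) / 2) * (a * b - d ^ 2 * (1 + Real.cos θ) / 2)
        ≤ (a * b - c ^ 2 / 2) * (a * b - d ^ 2 / 2) := by
      have e1 : a * b - c ^ 2 * (1 + Real.cos θ) / 2 ≤ a * b - c ^ 2 / 2 := by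
        nlinarith [mul_nonneg hc2 hcos0]
      have e2 : a * b - d ^ 2 * (1 + Real.cos θ) / 2 ≤ a * b - d ^ 2 / 2 := by
        nlinarith [mul_nonneg hd2 hcos0]
      exact mul_le_mul e1 e2 (by linarith) (by linarith)
    have hDpos : (0:ℝ) ≤ (a * b - c ^ 2) * (a * b - d ^ 2) := by nlinarith
    have hdiv : (a * b - c ^ 2) * (a * b - d ^ 2) / ((a * b - c ^ 2 / 2) * (a * b - d ^ 2 / 2))
        ≤ (a * b - c ^ 2) * (a * b - d ^ 2) /
          ((a * b - c ^ 2 * (1 + Real.cos θ) / 2) * (a * b - d ^ 2 * (1 + Real.cos θ) / 2)) := by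
      have hMpos : 0 < (a * b - c ^ 2 * (1 + Real.cos θ) / 2) *
          (a * b - d ^ 2 * (1 + Real.cos θ) / 2) := by nlinarith
      exact div_le_div_of_nonneg_left hDpos hMpos hMle
    linarith
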